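/- Let n = 2k with k odd and k ≥ 3. Then the bipyramid BP_n has exactly two zigzags up to cyclic shift and reversal, namely the cyclic sequence a, 1, 2, b, 3, 4, …, a, n−1, n, b, 1, 2, a, 3, 4, …, b, n−1, n and the cyclic sequence a, 2, 3, b, …, b, n−2, n−1, a, n, 1, b, 2, 3, a, …, a, n−2, n−1, b, n, 1. -/

import Mathlib

universe u v

/-- The data of an embedded graph: a simple graph together with a collection of
(triangular) faces, each face recorded as the finite set of its vertices. -/
structure PreTriangulation (V : Type u) where
  graph : SimpleGraph V
  faces : Set (Finset V)

namespace PreTriangulation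

variable {V : Type u} {V' : Type v}

/-- `T` is a combinatorial triangulation: a finite simple connected graph together with
a collection of faces, each face being a set of three pairwise adjacent vertices, such that
every edge lies in exactly two faces and two distinct faces share at most one edge. -/
structure IsTriangulation [DecidableEq V] (T : PreTriangulation V) : Prop where
  finiteVerts : Finite V
  connected : T.graph.Connected
  face_card : ∀ F ∈ T.faces, F.card = 3
  face_adj : ∀ F ∈ T.faces, ∀ x ∈ F, ∀ y ∈ F, x ≠ y → T.graph.Adj x y
  edge_in_two_faces : ∀ x y : V, T.graph.Adj x y →
    {F | F ∈ T.faces ∧ x ∈ F ∧ y ∈ F}.ncard = 2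
  faces_share_at_most_one_edge :
    ∀ F ∈ T.faces, ∀ G ∈ T.faces, F ≠ G → (F ∩ G).card ≤ 2

section

variable [DecidableEq V] [DecidableEq V']

/-- A zigzag in `T`: a cyclic sequence of vertices (encoded as a periodic function `ℤ → V`
whose minimal period `n` is the length of the zigzag, with `n > 3`) such that any two
consecutive vertices are distinct and adjacent, any three consecutive vertices lie in a
unique face, and the faces determined by two consecutive triples are distinct. -/
structure Zigzag (T : PreTriangulation V) where
  n : ℕ
  three_lt_n : 3 < n
  seq : ℤ → V
  periodic : ∀ i : ℤ, seq (i + n) = seq i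
  n_minimal : ∀ m : ℕ, 0 < m → (∀ i : ℤ, seq (i + m) = seq i) → n ≤ m
  seq_ne : ∀ i : ℤ, seq i ≠ seq (i + 1)
  seq_adj : ∀ i : ℤ, T.graph.Adj (seq i) (seq (i + 1))
  face : ℤ → Finset V
  face_mem : ∀ i : ℤ, face i ∈ T.faces
  subset_face : ∀ i : ℤ, ({seq i, seq (i + 1), seq (i + 2)} : Finset V) ⊆ face i
  face_unique : ∀ i : ℤ, ∀ G ∈ T.faces,
    ({seq i, seq (i + 1), seq (i + 2)} : Finset V) ⊆ G → G = face i
  face_ne : ∀ i : ℤ, face i ≠ face (i + 1)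

variable {T : PreTriangulation V}

/-- Two zigzags are equivalent if they agree up to a cyclic shift or up to a cyclic
shift combined with reversal. -/
def ZigzagEquiv (Z Z' : T.Zigzag) : Prop :=
  (∃ k : ℤ, ∀ i : ℤ, Z'.seq i = Z.seq (i + k)) ∨
  (∃ k : ℤ, ∀ i : ℤ, Z'.seq i = Z.seq (k - i))

/-- `T` is z-knotted: it has exactly one zigzag up to cyclic shift and reversal. -/
def ZKnotted (T : PreTriangulation V) [DecidableEq V] : Prop :=
  Nonempty T.Zigzag ∧ ∀ Z Z' : T.Zigzag, ZigzagEquiv Z Z'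

/-- `T` has exactly two zigzags up to cyclic shift and reversal. -/
def HasExactlyTwoZigzags (T : PreTriangulation V) [DecidableEq V] : Prop :=
  ∃ Z₁ Z₂ : T.Zigzag, ¬ ZigzagEquiv Z₁ Z₂ ∧
    ∀ Z : T.Zigzag, ZigzagEquiv Z Z₁ ∨ ZigzagEquiv Z Z₂

/-- `T` has exactly three zigzags up to cyclic shift and reversal. -/
def HasExactlyThreeZigzags (T : PreTriangulation V) [DecidableEq V] : Prop :=
  ∃ Z₁ Z₂ Z₃ : T.Zigzag, ¬ ZigzagEquiv Z₁ Z₂ ∧ ¬ ZigzagEquiv Z₁ Z₃ ∧ ¬ ZigzagEquiv Z₂ Z₃ ∧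
    ∀ Z : T.Zigzag, ZigzagEquiv Z Z₁ ∨ ZigzagEquiv Z Z₂ ∨ ZigzagEquiv Z Z₃

namespace Zigzag

/-- The zigzag passes from `x` to `y` (in this order) at some position. -/
def Passes (Z : T.Zigzag) (x y : V) : Prop :=
  ∃ i : ℤ, Z.seq i = x ∧ Z.seq (i + 1) = y

/-- The zigzag passes from `x` to `y` (in this order) at two distinct positions
of the cyclic sequence. -/
def PassesTwice (Z : T.Zigzag) (x y : V) : Prop :=
  ∃ i j : ℤ, (i : ZMod Z.n) ≠ (j : ZMod Z.n) ∧
    Z.seq i = x ∧ Z.seq (i + 1) = y ∧ Z.seq j = x ∧ Z.seq (j + 1) = y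

/-- The edge `{x, y}` is of first type: the zigzag contains both `x, y` and `y, x`
as pairs of consecutive vertices. -/
def FirstTypeEdge (Z : T.Zigzag) (x y : V) : Prop := Z.Passes x y ∧ Z.Passes y x

/-- The edge `{x, y}` is of second type: the zigzag contains the same ordered pair
(`x, y` or `y, x`) twice. -/
def SecondTypeEdge (Z : T.Zigzag) (x y : V) : Prop :=
  Z.PassesTwice x y ∨ Z.PassesTwice y x

/-- The number of positions of the cyclic sequence at which the pair of consecutive
vertices equals `{x, y}` (in either order). -/
noncomputable def passCount (Z : T.Zigzag) (x y : V) : ℕ :=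
  Nat.card {i : Fin Z.n //
    (Z.seq ((i : ℕ) : ℤ) = x ∧ Z.seq (((i : ℕ) : ℤ) + 1) = y) ∨
    (Z.seq ((i : ℕ) : ℤ) = y ∧ Z.seq (((i : ℕ) : ℤ) + 1) = x)}

/-- The number of positions of the cyclic sequence at which the triple of consecutive
vertices has vertex set equal to `F`. -/
noncomputable def faceCount (Z : T.Zigzag) (F : Finset V) : ℕ :=
  Nat.card {i : Fin Z.n //
    ({Z.seq ((i : ℕ) : ℤ), Z.seq (((i : ℕ) : ℤ) + 1), Z.seq (((i : ℕ) : ℤ) + 2)} :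
      Finset V) = F}

/-- The three consecutive vertices of the zigzag at position `i` are `x, y, z`. -/
def TripleAt (Z : T.Zigzag) (i : ℤ) (x y z : V) : Prop :=
  Z.seq i = x ∧ Z.seq (i + 1) = y ∧ Z.seq (i + 2) = z

/-- The zigzag has the cyclic form `x₁,y₁,z₁, …, x₂,y₂,z₂, …, x₃,y₃,z₃, …`:
the three triples occur in this cyclic order within one period. -/
def CyclicTriples (Z : T.Zigzag) (x₁ y₁ z₁ x₂ y₂ z₂ x₃ y₃ z₃ : V) : Prop :=
  ∃ (i : ℤ) (p q : ℕ), 0 < p ∧ p < q ∧ q < Z.n ∧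
    Z.TripleAt i x₁ y₁ z₁ ∧ Z.TripleAt (i + p) x₂ y₂ z₂ ∧ Z.TripleAt (i + q) x₃ y₃ z₃

/-- `F` is a `(1,1,2)`-face: exactly one of its three edges is of second type. -/
def Is112Face (Z : T.Zigzag) (F : Finset V) : Prop :=
  ∃ x y z : V, F = {x, y, z} ∧ x ≠ y ∧ x ≠ z ∧ y ≠ z ∧
    Z.SecondTypeEdge y z ∧ ¬ Z.SecondTypeEdge x y ∧ ¬ Z.SecondTypeEdge x z

/-- `F` is a `(2,2,2)`-face: all three of its edges are of second type. -/
def Is222Face (Z : T.Zigzag) (F : Finset V) : Prop :=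
  ∃ x y z : V, F = {x, y, z} ∧ x ≠ y ∧ x ≠ z ∧ y ≠ z ∧
    Z.SecondTypeEdge x y ∧ Z.SecondTypeEdge y z ∧ Z.SecondTypeEdge x z

/-- `F` is a `(1,1,2)`-face of odd type: with vertices `x, y, z`, where `{y, z}` is the
edge of second type and the zigzag twice passes from `y` to `z`, the zigzag has the
cyclic form `x,y,z, …, y,x,z, …, y,z,x, …`. -/
def Is112OddFace (Z : T.Zigzag) (F : Finset V) : Prop :=
  ∃ x y z : V, F = {x, y, z} ∧ x ≠ y ∧ x ≠ z ∧ y ≠ z ∧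
    Z.SecondTypeEdge y z ∧ ¬ Z.SecondTypeEdge x y ∧ ¬ Z.SecondTypeEdge x z ∧
    Z.PassesTwice y z ∧ Z.CyclicTriples x y z y x z y z x

/-- `F` is a `(1,1,2)`-face of even type: with vertices `x, y, z`, where `{y, z}` is the
edge of second type and the zigzag twice passes from `y` to `z`, the zigzag has the
cyclic form `x,y,z, …, y,z,x, …, y,x,z, …`. -/
def Is112EvenFace (Z : T.Zigzag) (F : Finset V) : Prop :=
  ∃ x y z : V, F = {x, y, z} ∧ x ≠ y ∧ x ≠ z ∧ y ≠ z ∧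
    Z.SecondTypeEdge y z ∧ ¬ Z.SecondTypeEdge x y ∧ ¬ Z.SecondTypeEdge x z ∧
    Z.PassesTwice y z ∧ Z.CyclicTriples x y z y z x y x z

/-- `F` is a `(2,2,2)`-face of first type: with vertices `x, y, z` such that the zigzag
twice passes from `x` to `y`, twice from `y` to `z` and twice from `z` to `x`, the
zigzag has the cyclic form `x,y,z, …, z,x,y, …, y,z,x, …`. -/
def Is222FirstFace (Z : T.Zigzag) (F : Finset V) : Prop :=
  ∃ x y z : V, F = {x, y, z} ∧ x ≠ y ∧ x ≠ z ∧ y ≠ z ∧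
    Z.PassesTwice x y ∧ Z.PassesTwice y z ∧ Z.PassesTwice z x ∧
    Z.CyclicTriples x y z z x y y z x

/-- `F` is a `(2,2,2)`-face of second type: with vertices `x, y, z` such that the zigzag
twice passes from `x` to `y`, twice from `y` to `z` and twice from `z` to `x`, the
zigzag has the cyclic form `x,y,z, …, y,z,x, …, z,x,y, …`. -/
def Is222SecondFace (Z : T.Zigzag) (F : Finset V) : Prop :=
  ∃ x y z : V, F = {x, y, z} ∧ x ≠ y ∧ x ≠ z ∧ y ≠ z ∧
    Z.PassesTwice x y ∧ Z.PassesTwice y z ∧ Z.PassesTwice z x ∧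
    Z.CyclicTriples x y z y z x z x y

/-- `a` is the vertex of the face `F` which does not lie on an edge of `F` of
second type. -/
def IsApex (Z : T.Zigzag) (F : Finset V) (a : V) : Prop :=
  a ∈ F ∧ ∀ y ∈ F, y ≠ a → ¬ Z.SecondTypeEdge a y

end Zigzag

end

section ConnectedSum

variable [DecidableEq V] [DecidableEq V']

/-- The map gluing `Γ'` onto `Γ`: a vertex of `F'` is sent to the corresponding
(under `g`) vertex of `F`, all other vertices of `Γ'` are kept. -/
noncomputable def glueMap [Nonempty V] (F : Finset V) (F' : Finset V') (g : V → V') (y : V') :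
    V ⊕ {y : V' // y ∉ F'} :=
  if h : y ∈ F' then Sum.inl (Function.invFunOn g ↑F y) else Sum.inr ⟨y, h⟩

/-- The connected sum `T #_g T'` of two triangulations along the faces `F` and `F'`,
via the identification `g` of the vertices of `F` with the vertices of `F'`:
the disjoint union of `T` and `T'` in which every vertex `v` of `F` is identified with
`g v` (and the edges of `F` are identified with the corresponding edges of `F'`),
whose faces are all faces of `T` other than `F` together with all faces of `T'`
other than `F'`. -/
noncomputable def connectedSum [Nonempty V] (T : PreTriangulation V) (T' : PreTriangulation V')
    (F : Finset V) (F' : Finset V') (g : V → V') :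
    PreTriangulation (V ⊕ {y : V' // y ∉ F'}) where
  graph :=
    { Adj := fun u v => u ≠ v ∧
        ((∃ x y : V, T.graph.Adj x y ∧ u = Sum.inl x ∧ v = Sum.inl y) ∨
         (∃ x y : V', T'.graph.Adj x y ∧ u = glueMap F F' g x ∧ v = glueMap F F' g y))
      symm := ⟨by
        rintro u v ⟨hne, h⟩
        refine ⟨hne.symm, ?_⟩
        rcases h with ⟨x, y, hxy, hu, hv⟩ | ⟨x, y, hxy, hu, hv⟩
        · exact Or.inl ⟨y, x, hxy.symm, hv, hu⟩
        · exact Or.inr ⟨y, x, hxy.symm, hv, hu⟩⟩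
      loopless := ⟨fun u h => h.1 rfl⟩ }
  faces :=
    {G | (∃ A ∈ T.faces, A ≠ F ∧ G = A.image Sum.inl) ∨
         (∃ A ∈ T'.faces, A ≠ F' ∧ G = A.image (glueMap F F' g))}

end ConnectedSum

/-- `T` and `T'` are isomorphic as graphs together with their collections of faces. -/
def IsIsoTo [DecidableEq V'] (T : PreTriangulation V) (T' : PreTriangulation V') : Prop :=
  ∃ e : V ≃ V', (∀ x y : V, T.graph.Adj x y ↔ T'.graph.Adj (e x) (e y)) ∧
    (∀ G : Finset V, G ∈ T.faces ↔ G.image e ∈ T'.faces)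

/-- The bipyramid `BP n`.  The two apices `a, b` are `Sum.inl true, Sum.inl false`;
the vertices `1, …, n` of the `n`-gon are `Sum.inr 0, …, Sum.inr (n-1)` (that is, the
paper's vertex `i` is `Sum.inr (i - 1)`). -/
def bp (n : ℕ) : PreTriangulation (Bool ⊕ ZMod n) where
  graph :=
    { Adj := fun u v =>
        match u, v with
        | Sum.inl _, Sum.inl _ => False
        | Sum.inl _, Sum.inr _ => True
        | Sum.inr _, Sum.inl _ => True
        | Sum.inr i, Sum.inr j => i ≠ j ∧ (j = i + 1 ∨ i = j + 1)
      symm := ⟨by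
        rintro (s | i) (t | j) h
        · exact h.elim
        · trivial
        · trivial
        · exact ⟨h.1.symm, h.2.symm⟩⟩
      loopless := ⟨by
        rintro (s | i) h
        · exact h
        · exact h.1 rfl⟩ }
  faces := {G | ∃ (s : Bool) (i : ZMod n), G = {Sum.inl s, Sum.inr i, Sum.inr (i + 1)}}

/-- The complete graph on four vertices regarded as a combinatorial triangulation whose
faces are all four 3-element vertex subsets. -/
def k4 : PreTriangulation (Fin 4) where
  graph := ⊤
  faces := {G | G.card = 3}

/-- The cyclic sequence `a, 1+c, 2+c, b, 3+c, 4+c, …, a, n-1+c, n+c, b, 1+c, 2+c, a, 3+c, 4+c,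
…, b, n-1+c, n+c` in the bipyramid `BP n` (for `n` even), of length `3 n`, written in the
paper's labels; `c` is an offset.  Here `a = Sum.inl true`, `b = Sum.inl false` and the
paper's vertex `i` is `Sum.inr (i - 1)`. -/
def bpZigSeq (n : ℕ) (c : ZMod n) : ℤ → Bool ⊕ ZMod n := fun i =>
  let j : ℕ := (i % (3 * (n : ℤ))).toNat
  if j % 3 = 0 then Sum.inl (decide (j / 3 % 2 = 0))
  else Sum.inr (((2 * (j / 3) + (if j % 3 = 1 then 0 else 1) : ℕ) : ZMod n) + c)

end PreTriangulation

open PreTriangulation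

section
variable {k : ℕ}
namespace ZZAux

lemma one_ne {k : ℕ} (hk3 : 3 ≤ k) : (1 : ZMod (2*k)) ≠ 0 := by
  intro h
  have : ((1:ℕ) : ZMod (2*k)) = 0 := by exact_mod_cast h
  rw [ZMod.natCast_eq_zero_iff] at this
  have := Nat.le_of_dvd (by omega) this
  omega

lemma two_ne {k : ℕ} (hk3 : 3 ≤ k) : (2 : ZMod (2*k)) ≠ 0 := by
  intro h
  have : ((2:ℕ) : ZMod (2*k)) = 0 := by exact_mod_cast h
  rw [ZMod.natCast_eq_zero_iff] at this
  have := Nat.le_of_dvd (by omega) this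
  omega

lemma two_mul_ne {k : ℕ} (w v : ZMod (2*k)) : 2*w ≠ 2*v + 1 := by
  intro h
  have h2 := congrArg (ZMod.castHom (show (2:ℕ) ∣ 2*k from ⟨k, rfl⟩) (ZMod 2)) h
  simp only [map_add, map_mul, map_one, map_ofNat] at h2
  have e2 : (2 : ZMod 2) = 0 := rfl
  rw [e2, zero_mul, zero_mul, zero_add] at h2
  exact one_ne_zero h2.symm

lemma zcast_emod (n : ℕ) (q : ℤ) : ((q % (n:ℤ) : ℤ) : ZMod n) = (q : ZMod n) := by
  conv_rhs => rw [← Int.mul_ediv_add_emod q (n:ℤ)]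
  push_cast
  simp [ZMod.natCast_self]

lemma bz (hk3 : 3 ≤ k) (c : ZMod (2*k)) (q : ℤ) (r : ℕ) (hr : r < 3) :
    bpZigSeq (2*k) c (3*q + r) =
      if r = 0 then Sum.inl (decide (q % 2 = 0))
      else Sum.inr (2 * (q : ZMod (2*k)) + (if r = 1 then 0 else 1) + c) := by
  have hn : (0:ℤ) < ((2*k:ℕ):ℤ) := by push_cast; omega
  set t : ℤ := q % ((2*k:ℕ):ℤ) with ht
  have ht0 : 0 ≤ t := Int.emod_nonneg q (by omega)
  have htlt : t < ((2*k:ℕ):ℤ) := Int.emod_lt_of_pos q hn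
  have hq : ((2*k:ℕ):ℤ) * (q / ((2*k:ℕ):ℤ)) + t = q := Int.mul_ediv_add_emod q _
  have hmod : (3*q + (r:ℤ)) % (3 * ((2*k:ℕ):ℤ)) = 3*t + r := by
    have h3 : 3*q + (r:ℤ) = (3*t + r) + (3 * ((2*k:ℕ):ℤ)) * (q / ((2*k:ℕ):ℤ)) := by
      linarith [hq]
    rw [h3, Int.add_mul_emod_self_left]
    exact Int.emod_eq_of_lt (by omega) (by push_cast at htlt ⊢; omega)
  simp only [bpZigSeq, hmod]
  have htn : (3*t + (r:ℤ)).toNat = 3 * t.toNat + r := by omega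
  rw [htn]
  have hm3 : (3 * t.toNat + r) % 3 = r := by omega
  have hd3 : (3 * t.toNat + r) / 3 = t.toNat := by omega
  rw [hm3, hd3]
  have hcast : ((t.toNat:ℕ) : ZMod (2*k)) = (q : ZMod (2*k)) := by
    have h := zcast_emod (2*k) q
    rw [← ht] at h
    rwa [← Int.toNat_of_nonneg ht0, Int.cast_natCast] at h
  interval_cases r
  · have h2 : t % 2 = q % 2 := by
      rw [ht]; exact Int.emod_emod_of_dvd q ⟨k, by push_cast; ring⟩
    norm_num [decide_eq_decide]
    omega
  · norm_num [hcast]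
  · norm_num [hcast]


lemma bz0 (hk3 : 3 ≤ k) (c : ZMod (2*k)) (q : ℤ) :
    bpZigSeq (2*k) c (3*q) = Sum.inl (decide (q % 2 = 0)) := by
  have h := bz hk3 c q 0 (by norm_num)
  rw [if_pos rfl] at h
  rw [← h]
  norm_num

lemma bz1 (hk3 : 3 ≤ k) (c : ZMod (2*k)) (q : ℤ) :
    bpZigSeq (2*k) c (3*q+1) = Sum.inr (2 * (q : ZMod (2*k)) + c) := by
  have := bz hk3 c q 1 (by norm_num)
  norm_num at this
  exact this

lemma bz2 (hk3 : 3 ≤ k) (c : ZMod (2*k)) (q : ℤ) :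
    bpZigSeq (2*k) c (3*q+2) = Sum.inr (2 * (q : ZMod (2*k)) + c + 1) := by
  have := bz hk3 c q 2 (by norm_num)
  norm_num at this
  rw [this]
  congr 1
  ring

lemma bz3 (hk3 : 3 ≤ k) (c : ZMod (2*k)) (q : ℤ) :
    bpZigSeq (2*k) c (3*q+3) = Sum.inl (decide ((q+1) % 2 = 0)) := by
  rw [show (3*q+3 : ℤ) = 3*(q+1) by ring, bz0 hk3]

lemma bz4 (hk3 : 3 ≤ k) (c : ZMod (2*k)) (q : ℤ) :
    bpZigSeq (2*k) c (3*q+4) = Sum.inr (2 * (q : ZMod (2*k)) + c + 2) := by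
  rw [show (3*q+4 : ℤ) = 3*(q+1)+1 by ring, bz1 hk3]
  congr 1
  push_cast
  ring


lemma mem3 {V : Type} [DecidableEq V] {a b c : V} {G : Finset V} :
    ({a, b, c} : Finset V) ⊆ G ↔ a ∈ G ∧ b ∈ G ∧ c ∈ G := by
  simp [Finset.insert_subset_iff]

lemma tripleflip {V : Type} [DecidableEq V] (a b c : V) :
    ({a, b, c} : Finset V) = {c, b, a} := by
  apply Finset.ext; intro x; simp; tauto

lemma self_ne_add_one (hk3 : 3 ≤ k) (v : ZMod (2*k)) : v ≠ v + 1 := by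
  intro h
  exact one_ne hk3 (by linear_combination -h)

lemma face_card3 (hk3 : 3 ≤ k) : ∀ G ∈ (bp (2*k)).faces, G.card = 3 := by
  rintro G ⟨s, u, rfl⟩
  rw [Finset.card_insert_of_notMem (by simp), Finset.card_insert_of_notMem (by
    simp only [Finset.mem_singleton]
    intro h
    exact one_ne hk3 (by linear_combination -(Sum.inr.inj h))), Finset.card_singleton]

lemma bp_face_unique (hk3 : 3 ≤ k) {G : Finset (Bool ⊕ ZMod (2*k))}
    (hG : G ∈ (bp (2*k)).faces) (s : Bool) (u : ZMod (2*k))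
    (h1 : Sum.inl s ∈ G) (h2 : Sum.inr u ∈ G) (h3 : Sum.inr (u+1) ∈ G) :
    G = {Sum.inl s, Sum.inr u, Sum.inr (u+1)} := by
  obtain ⟨t, j, rfl⟩ := hG
  simp only [Finset.mem_insert, Finset.mem_singleton, Sum.inl.injEq, Sum.inr.injEq,
    reduceCtorEq, false_or, or_false] at h1 h2 h3
  obtain rfl : s = t := h1
  rcases h2 with rfl | rfl
  · rfl
  · exfalso
    rcases h3 with h3 | h3
    · exact two_ne hk3 (by linear_combination h3)
    · exact one_ne hk3 (by linear_combination h3)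

lemma faces_on_edge (hk3 : 3 ≤ k) {x y : Bool ⊕ ZMod (2*k)}
    (hadj : (bp (2*k)).graph.Adj x y) :
    ∃ F₁ F₂ : Finset (Bool ⊕ ZMod (2*k)), F₁ ∈ (bp (2*k)).faces ∧ F₂ ∈ (bp (2*k)).faces ∧
      F₁ ≠ F₂ ∧ (x ∈ F₁ ∧ y ∈ F₁) ∧ (x ∈ F₂ ∧ y ∈ F₂) ∧
      ∀ G ∈ (bp (2*k)).faces, x ∈ G → y ∈ G → G = F₁ ∨ G = F₂ := by
  have hedge : ∀ s : Bool, ∀ v : ZMod (2*k),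
      ∃ F₁ F₂ : Finset (Bool ⊕ ZMod (2*k)), F₁ ∈ (bp (2*k)).faces ∧ F₂ ∈ (bp (2*k)).faces ∧
      F₁ ≠ F₂ ∧ (Sum.inl s ∈ F₁ ∧ Sum.inr v ∈ F₁) ∧ (Sum.inl s ∈ F₂ ∧ Sum.inr v ∈ F₂) ∧
      ∀ G ∈ (bp (2*k)).faces, Sum.inl s ∈ G → Sum.inr v ∈ G → G = F₁ ∨ G = F₂ := by
    intro s v
    refine ⟨{Sum.inl s, Sum.inr v, Sum.inr (v+1)}, {Sum.inl s, Sum.inr (v-1), Sum.inr v},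
      ⟨s, v, rfl⟩, ⟨s, v-1, by rw [show v-1+1 = v by ring]⟩, ?_, by simp, by simp, ?_⟩
    · intro h
      have hm : (Sum.inr (v+1) : Bool ⊕ ZMod (2*k)) ∈
          ({Sum.inl s, Sum.inr (v-1), Sum.inr v} : Finset (Bool ⊕ ZMod (2*k))) := by
        rw [← h]; simp
      simp only [Finset.mem_insert, Finset.mem_singleton, Sum.inr.injEq,
        reduceCtorEq, false_or] at hm
      rcases hm with hm | hm
      · exact two_ne hk3 (by linear_combination hm)
      · exact one_ne hk3 (by linear_combination hm)
    · rintro G ⟨t, j, rfl⟩ hxG hyG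
      simp only [Finset.mem_insert, Finset.mem_singleton, Sum.inl.injEq, Sum.inr.injEq,
        reduceCtorEq, false_or, or_false] at hxG hyG
      obtain rfl : s = t := hxG
      rcases hyG with rfl | rfl
      · exact Or.inl rfl
      · right
        rw [show j + 1 - 1 = j by ring]
  rcases x with s | u <;> rcases y with t | v
  · exact absurd hadj (by simp [bp])
  · exact hedge s v
  · obtain ⟨F₁, F₂, m₁, m₂, hne, ⟨ha, hb⟩, ⟨hc, hd⟩, hcl⟩ := hedge t u
    exact ⟨F₁, F₂, m₁, m₂, hne, ⟨hb, ha⟩, ⟨hd, hc⟩, fun G hG h1 h2 => hcl G hG h2 h1⟩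
  · have h2 : v = u + 1 ∨ u = v + 1 := hadj.2
    have key : ∀ w : ZMod (2*k),
        ∀ G ∈ (bp (2*k)).faces, Sum.inr w ∈ G → Sum.inr (w+1) ∈ G →
        G = {Sum.inl true, Sum.inr w, Sum.inr (w+1)} ∨
        G = {Sum.inl false, Sum.inr w, Sum.inr (w+1)} := by
      rintro w G hG hu hv
      obtain ⟨t', j, rfl⟩ := hG
      simp only [Finset.mem_insert, Finset.mem_singleton, Sum.inr.injEq,
        reduceCtorEq, false_or] at hu hv
      rcases hu with rfl | rfl
      · rcases t' with _ | _
        · right; rfl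
        · left; rfl
      · exfalso
        rcases hv with h' | h'
        · exact two_ne hk3 (by linear_combination h')
        · exact one_ne hk3 (by linear_combination h')
    have hTF : ∀ w : ZMod (2*k), ({Sum.inl true, Sum.inr w, Sum.inr (w+1)} : Finset (Bool ⊕ ZMod (2*k))) ≠
        {Sum.inl false, Sum.inr w, Sum.inr (w+1)} := by
      intro w h
      have hm : (Sum.inl true : Bool ⊕ ZMod (2*k)) ∈
          ({Sum.inl false, Sum.inr w, Sum.inr (w+1)} : Finset (Bool ⊕ ZMod (2*k))) := by
        rw [← h]; simp
      simp at hm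
    rcases h2 with rfl | rfl
    · refine ⟨{Sum.inl true, Sum.inr u, Sum.inr (u+1)}, {Sum.inl false, Sum.inr u, Sum.inr (u+1)},
        ⟨true, u, rfl⟩, ⟨false, u, rfl⟩, hTF u, by simp, by simp, ?_⟩
      intro G hG h1' h2'
      exact key u G hG h1' h2'
    · refine ⟨{Sum.inl true, Sum.inr v, Sum.inr (v+1)}, {Sum.inl false, Sum.inr v, Sum.inr (v+1)},
        ⟨true, v, rfl⟩, ⟨false, v, rfl⟩, hTF v, by simp, by simp, ?_⟩
      intro G hG h1' h2'
      exact key v G hG h2' h1'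


lemma third_unique {V : Type} [DecidableEq V] {F : Finset V} (hF : F.card = 3)
    {p q a b : V} (hpq : p ≠ q) (hp : p ∈ F) (hq : q ∈ F) (ha : a ∈ F) (hb : b ∈ F)
    (hap : a ≠ p) (haq : a ≠ q) (hbp : b ≠ p) (hbq : b ≠ q) : a = b := by
  have hcard : ((F.erase p).erase q).card = 1 := by
    rw [Finset.card_erase_of_mem (Finset.mem_erase.mpr ⟨fun h => hpq h.symm, hq⟩),
      Finset.card_erase_of_mem hp, hF]
  obtain ⟨w, hw⟩ := Finset.card_eq_one.mp hcard
  have haw : a ∈ ({w} : Finset V) := hw ▸ (Finset.mem_erase.mpr ⟨haq, Finset.mem_erase.mpr ⟨hap, ha⟩⟩)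
  have hbw : b ∈ ({w} : Finset V) := hw ▸ (Finset.mem_erase.mpr ⟨hbq, Finset.mem_erase.mpr ⟨hbp, hb⟩⟩)
  simp only [Finset.mem_singleton] at haw hbw
  rw [haw, hbw]

variable {T : PreTriangulation (Bool ⊕ ZMod (2*k))}

lemma seq_ne2 (hk3 : 3 ≤ k) (Z : (bp (2*k)).Zigzag) (i : ℤ) : Z.seq i ≠ Z.seq (i+2) := by
  intro h
  obtain ⟨F₁, F₂, m₁, m₂, hne, ⟨hx1, hy1⟩, ⟨hx2, hy2⟩, hcl⟩ :=
    faces_on_edge hk3 (Z.seq_adj i)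
  have hsub : ∀ F : Finset (Bool ⊕ ZMod (2*k)), Z.seq i ∈ F → Z.seq (i+1) ∈ F →
      ({Z.seq i, Z.seq (i+1), Z.seq (i+2)} : Finset (Bool ⊕ ZMod (2*k))) ⊆ F := by
    intro F hx hy
    rw [mem3]
    exact ⟨hx, hy, h ▸ hx⟩
  have e1 := Z.face_unique i F₁ m₁ (hsub F₁ hx1 hy1)
  have e2 := Z.face_unique i F₂ m₂ (hsub F₂ hx2 hy2)
  exact hne (e1.trans e2.symm)

lemma step_forward (hk3 : 3 ≤ k) (Z W : (bp (2*k)).Zigzag) (i j : ℤ)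
    (h0 : Z.seq i = W.seq j) (h1 : Z.seq (i+1) = W.seq (j+1)) (h2 : Z.seq (i+2) = W.seq (j+2)) :
    Z.seq (i+3) = W.seq (j+3) := by
  have hWs := mem3.mp (W.subset_face j)
  have hfj : W.face j = Z.face i := Z.face_unique i (W.face j) (W.face_mem j) (by
    rw [mem3, h0, h1, h2]
    exact ⟨hWs.1, hWs.2.1, hWs.2.2⟩)
  have hZi := mem3.mp (Z.subset_face i)
  have hZi1 := mem3.mp (Z.subset_face (i+1))
  rw [show i+1+1 = i+2 by ring, show i+1+2 = i+3 by ring] at hZi1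
  have hWj1 := mem3.mp (W.subset_face (j+1))
  rw [show j+1+1 = j+2 by ring, show j+1+2 = j+3 by ring] at hWj1
  have hadj : (bp (2*k)).graph.Adj (Z.seq (i+1)) (Z.seq (i+2)) := by
    have := Z.seq_adj (i+1)
    rwa [show i+1+1 = i+2 by ring] at this
  obtain ⟨F₁, F₂, m₁, m₂, hne, _, _, hcl⟩ := faces_on_edge hk3 hadj
  have hA : Z.face i = F₁ ∨ Z.face i = F₂ := hcl _ (Z.face_mem i) hZi.2.1 hZi.2.2
  have hB : Z.face (i+1) = F₁ ∨ Z.face (i+1) = F₂ := hcl _ (Z.face_mem (i+1)) hZi1.1 hZi1.2.1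
  have hC : W.face (j+1) = F₁ ∨ W.face (j+1) = F₂ := hcl _ (W.face_mem (j+1))
    (h1 ▸ hWj1.1) (h2 ▸ hWj1.2.1)
  have hBA : Z.face (i+1) ≠ Z.face i := (Z.face_ne i).symm
  have hCA : W.face (j+1) ≠ Z.face i := by rw [← hfj]; exact (W.face_ne j).symm
  have hfaces : Z.face (i+1) = W.face (j+1) := by
    rcases hA with hA | hA <;> rcases hB with hB | hB <;> rcases hC with hC | hC <;>
      simp_all
  -- third vertex
  have hz1 : Z.seq (i+3) ≠ Z.seq (i+2) := by
    have := Z.seq_ne (i+2)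
    rw [show i+2+1 = i+3 by ring] at this
    exact this.symm
  have hz2 : Z.seq (i+3) ≠ Z.seq (i+1) := by
    have := seq_ne2 hk3 Z (i+1)
    rw [show i+1+2 = i+3 by ring] at this
    exact this.symm
  have hw1 : W.seq (j+3) ≠ Z.seq (i+2) := by
    rw [h2]
    have := W.seq_ne (j+2)
    rw [show j+2+1 = j+3 by ring] at this
    exact this.symm
  have hw2 : W.seq (j+3) ≠ Z.seq (i+1) := by
    rw [h1]
    have := seq_ne2 hk3 W (j+1)
    rw [show j+1+2 = j+3 by ring] at this
    exact this.symm
  have hne12 : Z.seq (i+1) ≠ Z.seq (i+2) := by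
    have := Z.seq_ne (i+1)
    rwa [show i+1+1 = i+2 by ring] at this
  exact third_unique (face_card3 hk3 _ (Z.face_mem (i+1))) hne12 hZi1.1 hZi1.2.1
    hZi1.2.2 (hfaces ▸ hWj1.2.2) hz2 hz1 hw2 hw1

lemma step_backward (hk3 : 3 ≤ k) (Z W : (bp (2*k)).Zigzag) (i j : ℤ)
    (h0 : Z.seq i = W.seq j) (h1 : Z.seq (i+1) = W.seq (j+1)) (h2 : Z.seq (i+2) = W.seq (j+2)) :
    Z.seq (i-1) = W.seq (j-1) := by
  have hWs := mem3.mp (W.subset_face j)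
  have hfj : W.face j = Z.face i := Z.face_unique i (W.face j) (W.face_mem j) (by
    rw [mem3, h0, h1, h2]
    exact ⟨hWs.1, hWs.2.1, hWs.2.2⟩)
  have hZi := mem3.mp (Z.subset_face i)
  have hZi1 := mem3.mp (Z.subset_face (i-1))
  rw [show i-1+1 = i by ring, show i-1+2 = i+1 by ring] at hZi1
  have hWj1 := mem3.mp (W.subset_face (j-1))
  rw [show j-1+1 = j by ring, show j-1+2 = j+1 by ring] at hWj1
  obtain ⟨F₁, F₂, m₁, m₂, hne, _, _, hcl⟩ := faces_on_edge hk3 (Z.seq_adj i)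
  have hA : Z.face i = F₁ ∨ Z.face i = F₂ := hcl _ (Z.face_mem i) hZi.1 hZi.2.1
  have hB : Z.face (i-1) = F₁ ∨ Z.face (i-1) = F₂ := hcl _ (Z.face_mem (i-1)) hZi1.2.1 hZi1.2.2
  have hC : W.face (j-1) = F₁ ∨ W.face (j-1) = F₂ := hcl _ (W.face_mem (j-1))
    (h0 ▸ hWj1.2.1) (h1 ▸ hWj1.2.2)
  have hBA : Z.face (i-1) ≠ Z.face i := by
    have := Z.face_ne (i-1)
    rwa [show i-1+1 = i by ring] at this
  have hCA : W.face (j-1) ≠ Z.face i := by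
    rw [← hfj]
    have := W.face_ne (j-1)
    rwa [show j-1+1 = j by ring] at this
  have hfaces : Z.face (i-1) = W.face (j-1) := by
    rcases hA with hA | hA <;> rcases hB with hB | hB <;> rcases hC with hC | hC <;>
      simp_all
  have hz1 : Z.seq (i-1) ≠ Z.seq i := by
    have := Z.seq_ne (i-1)
    rwa [show i-1+1 = i by ring] at this
  have hz2 : Z.seq (i-1) ≠ Z.seq (i+1) := by
    have := seq_ne2 hk3 Z (i-1)
    rwa [show i-1+2 = i+1 by ring] at this
  have hw1 : W.seq (j-1) ≠ Z.seq i := by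
    rw [h0]
    have := W.seq_ne (j-1)
    rwa [show j-1+1 = j by ring] at this
  have hw2 : W.seq (j-1) ≠ Z.seq (i+1) := by
    rw [h1]
    have := seq_ne2 hk3 W (j-1)
    rwa [show j-1+2 = j+1 by ring] at this
  have hne12 : Z.seq i ≠ Z.seq (i+1) := Z.seq_ne i
  exact third_unique (face_card3 hk3 _ (Z.face_mem (i-1))) hne12 hZi1.2.1
    hZi1.2.2 hZi1.1 (hfaces ▸ hWj1.1) hz1 hz2 hw1 hw2

lemma determinism (hk3 : 3 ≤ k) (Z W : (bp (2*k)).Zigzag) (p : ℤ)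
    (h0 : Z.seq 0 = W.seq p) (h1 : Z.seq 1 = W.seq (p+1)) (h2 : Z.seq 2 = W.seq (p+2)) :
    ∀ m : ℤ, Z.seq m = W.seq (p+m) := by
  have key : ∀ m : ℤ, Z.seq m = W.seq (p+m) ∧ Z.seq (m+1) = W.seq (p+m+1) ∧
      Z.seq (m+2) = W.seq (p+m+2) := by
    intro m
    induction m using Int.induction_on with
    | zero =>
      refine ⟨by rw [add_zero]; exact h0, ?_, ?_⟩
      · rw [zero_add, show p+0+1 = p+1 by ring]; exact h1
      · rw [zero_add, show p+0+2 = p+2 by ring]; exact h2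
    | succ i ih =>
      obtain ⟨a, b, c⟩ := ih
      refine ⟨?_, ?_, ?_⟩
      · rw [show p+((i:ℤ)+1) = p+i+1 by ring]; exact b
      · rw [show (i:ℤ)+1+1 = (i:ℤ)+2 by ring, show p+((i:ℤ)+1)+1 = p+i+2 by ring]; exact c
      · rw [show (i:ℤ)+1+2 = (i:ℤ)+3 by ring, show p+((i:ℤ)+1)+2 = (p+(i:ℤ))+3 by ring]
        exact step_forward hk3 Z W i (p+i) a b c
    | pred i ih =>
      obtain ⟨a, b, c⟩ := ih
      have hstep := step_backward hk3 Z W (-(i:ℤ)) (p+(-(i:ℤ))) a b c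
      refine ⟨?_, ?_, ?_⟩
      · rw [show p+(-(i:ℤ)-1) = p + -(i:ℤ) - 1 by ring]; exact hstep
      · rw [show -(i:ℤ)-1+1 = -(i:ℤ) by ring, show p+(-(i:ℤ)-1)+1 = p + -(i:ℤ) by ring]; exact a
      · rw [show -(i:ℤ)-1+2 = -(i:ℤ)+1 by ring, show p+(-(i:ℤ)-1)+2 = p + -(i:ℤ)+1 by ring]
        exact b
  exact fun m => (key m).1


/-- The reversal of a zigzag. -/
def revZig {V : Type} [DecidableEq V] {T : PreTriangulation V} (Z : T.Zigzag) : T.Zigzag where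
  n := Z.n
  three_lt_n := Z.three_lt_n
  seq := fun i => Z.seq (-i)
  periodic := by
    intro i
    have := Z.periodic (-i - Z.n)
    rw [show -i - (Z.n:ℤ) + Z.n = -i by ring] at this
    rw [show -(i + (Z.n:ℤ)) = -i - Z.n by ring]
    exact this.symm
  n_minimal := by
    intro m hm hper
    apply Z.n_minimal m hm
    intro i
    have := hper (-i - m)
    rw [show -(-i - (m:ℤ) + m) = i by ring, show -(-i - (m:ℤ)) = i + m by ring] at this
    exact this.symm
  seq_ne := by
    intro i
    have := Z.seq_ne (-i-1)
    rw [show -i-1+1 = -i by ring] at this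
    rw [show -(i+1) = -i-1 by ring]
    exact fun h => this h.symm
  seq_adj := by
    intro i
    have := Z.seq_adj (-i-1)
    rw [show -i-1+1 = -i by ring] at this
    rw [show -(i+1) = -i-1 by ring]
    exact this.symm
  face := fun i => Z.face (-i - 2)
  face_mem := fun i => Z.face_mem (-i - 2)
  subset_face := by
    intro i
    have h := mem3.mp (Z.subset_face (-i-2))
    rw [show -i-2+1 = -i-1 by ring, show -i-2+2 = -i by ring] at h
    rw [mem3, show -(i+1) = -i-1 by ring, show -(i+2) = -i-2 by ring]
    exact ⟨h.2.2, h.2.1, h.1⟩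
  face_unique := by
    intro i G hG hsub
    rw [mem3, show -(i+1) = -i-1 by ring, show -(i+2) = -i-2 by ring] at hsub
    apply Z.face_unique (-i-2) G hG
    rw [mem3, show -i-2+1 = -i-1 by ring, show -i-2+2 = -i by ring]
    exact ⟨hsub.2.2, hsub.2.1, hsub.1⟩
  face_ne := by
    intro i
    have := Z.face_ne (-i-3)
    rw [show -i-3+1 = -i-2 by ring] at this
    rw [show -(i+1)-2 = -i-3 by ring]
    exact fun h => this h.symm

lemma equivFwd (hk3 : 3 ≤ k) (Z W : (bp (2*k)).Zigzag) (p : ℤ)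
    (h0 : Z.seq 0 = W.seq p) (h1 : Z.seq 1 = W.seq (p+1)) (h2 : Z.seq 2 = W.seq (p+2)) :
    ZigzagEquiv Z W := by
  have det := determinism hk3 Z W p h0 h1 h2
  left
  refine ⟨-p, fun i => ?_⟩
  have := det (i + -p)
  rw [show p + (i + -p) = i by ring] at this
  exact this.symm

lemma equivRev (hk3 : 3 ≤ k) (Z W : (bp (2*k)).Zigzag) (p : ℤ)
    (h0 : Z.seq 0 = W.seq p) (h1 : Z.seq 1 = W.seq (p-1)) (h2 : Z.seq 2 = W.seq (p-2)) :
    ZigzagEquiv Z W := by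
  have det := determinism hk3 Z (revZig W) (-p) (by
      show Z.seq 0 = W.seq (-(-p)); rwa [show -(-p) = p by ring]) (by
      show Z.seq 1 = W.seq (-(-p+1)); rwa [show -(-p+1) = p-1 by ring]) (by
      show Z.seq 2 = W.seq (-(-p+2)); rwa [show -(-p+2) = p-2 by ring])
  right
  refine ⟨p, fun i => ?_⟩
  have := det (p - i)
  rw [show -p + (p - i) = -i by ring] at this
  show W.seq i = Z.seq (p - i)
  rw [this]
  show W.seq i = W.seq (-(-i))
  rw [show -(-i) = i by ring]

lemma sb_succ (q : ℤ) : decide ((q+1) % 2 = 0) = !decide (q % 2 = 0) := by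
  by_cases h : q % 2 = 0
  · simp [h, show (q+1) % 2 ≠ 0 by omega]
  · simp [h, show (q+1) % 2 = 0 by omega]

lemma parity_pick (hkodd : Odd k) (b : Bool) (q₀ : ℤ) :
    ∃ q : ℤ, decide (q % 2 = 0) = b ∧ 2*(q : ZMod (2*k)) = 2*(q₀ : ZMod (2*k)) := by
  obtain ⟨m, hm⟩ := hkodd
  have hkz : (k:ℤ) = 2*m + 1 := by exact_mod_cast hm
  by_cases h : decide (q₀ % 2 = 0) = b
  · exact ⟨q₀, h, rfl⟩
  · refine ⟨q₀ + k, ?_, ?_⟩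
    · rcases b <;> simp_all <;> omega
    · push_cast
      have h0 : ((2*k:ℕ) : ZMod (2*k)) = 0 := ZMod.natCast_self _
      push_cast at h0
      linear_combination h0

lemma even_odd_pick (hk3 : 3 ≤ k) (u : ZMod (2*k)) :
    ∃ q₀ : ℤ, u = 2*(q₀ : ZMod (2*k)) ∨ u = 2*(q₀ : ZMod (2*k)) + 1 := by
  haveI : NeZero (2*k) := ⟨by omega⟩
  have hv : ((u.val:ℕ) : ZMod (2*k)) = u := ZMod.natCast_zmod_val u
  refine ⟨((u.val / 2 : ℕ) : ℤ), ?_⟩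
  rw [Int.cast_natCast]
  rcases Nat.even_or_odd u.val with he | ho
  · left
    have h2 : 2*(u.val/2) = u.val := Nat.mul_div_cancel' he.two_dvd
    conv_lhs => rw [← hv, ← h2]
    push_cast
    ring
  · right
    obtain ⟨t, ht⟩ := ho
    have h2 : u.val/2 = t := by omega
    conv_lhs => rw [← hv, ht]
    rw [h2]
    push_cast
    ring

set_option maxHeartbeats 1000000 in
lemma perm3 {α : Type} {A B C x y z : α}
    (hx : x = A ∨ x = B ∨ x = C) (hy : y = A ∨ y = B ∨ y = C) (hz : z = A ∨ z = B ∨ z = C)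
    (hxy : x ≠ y) (hxz : x ≠ z) (hyz : y ≠ z) :
    (x = A ∧ y = B ∧ z = C) ∨ (x = A ∧ y = C ∧ z = B) ∨ (x = B ∧ y = A ∧ z = C) ∨
    (x = B ∧ y = C ∧ z = A) ∨ (x = C ∧ y = A ∧ z = B) ∨ (x = C ∧ y = B ∧ z = A) := by
  rcases hx with h1 | h1 | h1 <;> rcases hy with h2 | h2 | h2 <;> rcases hz with h3 | h3 | h3 <;>
    subst_vars <;> simp_all


lemma adj_lr (s : Bool) (u : ZMod (2*k)) : (bp (2*k)).graph.Adj (Sum.inl s) (Sum.inr u) :=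
  trivial

lemma adj_rl (s : Bool) (u : ZMod (2*k)) : (bp (2*k)).graph.Adj (Sum.inr u) (Sum.inl s) :=
  trivial

lemma adj_ring (hk3 : 3 ≤ k) (x : ZMod (2*k)) :
    (bp (2*k)).graph.Adj (Sum.inr x) (Sum.inr (x+1)) :=
  ⟨self_ne_add_one hk3 x, Or.inl rfl⟩

def zface (k : ℕ) (c : ZMod (2*k)) (i : ℤ) : Finset (Bool ⊕ ZMod (2*k)) :=
  if i % 3 = 0 then
    {Sum.inl (decide ((i/3) % 2 = 0)), Sum.inr (2*((i/3 : ℤ) : ZMod (2*k)) + c),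
     Sum.inr (2*((i/3 : ℤ) : ZMod (2*k)) + c + 1)}
  else if i % 3 = 1 then
    {Sum.inl (decide ((i/3 + 1) % 2 = 0)), Sum.inr (2*((i/3 : ℤ) : ZMod (2*k)) + c),
     Sum.inr (2*((i/3 : ℤ) : ZMod (2*k)) + c + 1)}
  else
    {Sum.inl (decide ((i/3 + 1) % 2 = 0)), Sum.inr (2*((i/3 : ℤ) : ZMod (2*k)) + c + 1),
     Sum.inr (2*((i/3 : ℤ) : ZMod (2*k)) + c + 2)}

lemma zface0 (c : ZMod (2*k)) (q : ℤ) : zface k c (3*q) =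
    {Sum.inl (decide (q % 2 = 0)), Sum.inr (2*(q : ZMod (2*k)) + c),
     Sum.inr (2*(q : ZMod (2*k)) + c + 1)} := by
  have h1 : (3*q) % 3 = 0 := by omega
  have h2 : (3*q) / 3 = q := by omega
  simp [zface, h1, h2]

lemma zface1 (c : ZMod (2*k)) (q : ℤ) : zface k c (3*q+1) =
    {Sum.inl (decide ((q+1) % 2 = 0)), Sum.inr (2*(q : ZMod (2*k)) + c),
     Sum.inr (2*(q : ZMod (2*k)) + c + 1)} := by
  have h1 : (3*q+1) % 3 = 1 := by omega
  have h2 : (3*q+1) / 3 = q := by omega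
  simp [zface, h1, h2]

lemma zface2 (c : ZMod (2*k)) (q : ℤ) : zface k c (3*q+2) =
    {Sum.inl (decide ((q+1) % 2 = 0)), Sum.inr (2*(q : ZMod (2*k)) + c + 1),
     Sum.inr (2*(q : ZMod (2*k)) + c + 2)} := by
  have h1 : (3*q+2) % 3 = 2 := by omega
  have h2 : (3*q+2) / 3 = q := by omega
  simp [zface, h1, h2]

def mkZig (k : ℕ) (hk3 : 3 ≤ k) (hkodd : Odd k) (c : ZMod (2*k)) : (bp (2*k)).Zigzag where
  n := 6*k
  three_lt_n := by omega
  seq := bpZigSeq (2*k) c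
  periodic := by
    intro i
    simp only [bpZigSeq]
    have harg : (i + ((6*k:ℕ):ℤ)) % (3 * ((2*k:ℕ):ℤ)) = i % (3 * ((2*k:ℕ):ℤ)) := by
      rw [show i + ((6*k:ℕ):ℤ) = i + 3 * ((2*k:ℕ):ℤ) * 1 by push_cast; ring]
      exact Int.add_mul_emod_self_left ..
    rw [harg]
  n_minimal := by
    intro m hm hper
    by_contra hcon
    push_neg at hcon
    obtain ⟨mq, hmq⟩ : ∃ mq : ℕ, m = 3*mq ∨ m = 3*mq+1 ∨ m = 3*mq+2 := ⟨m/3, by omega⟩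
    have e0 := hper 0
    rw [zero_add] at e0
    have s0 : bpZigSeq (2*k) c 0 = Sum.inl true := by
      have h := bz0 hk3 c 0
      norm_num at h
      exact h
    rcases hmq with rfl | rfl | rfl
    · rw [show ((3*mq:ℕ):ℤ) = 3*(mq:ℤ) by push_cast; ring, bz0 hk3, s0] at e0
      have hq2 : (mq:ℤ) % 2 = 0 := by simpa using e0
      have e1 := hper 1
      rw [show (1:ℤ) + ((3*mq:ℕ):ℤ) = 3*(mq:ℤ)+1 by push_cast; ring, bz1 hk3] at e1
      rw [show (1:ℤ) = 3*(0:ℤ)+1 by norm_num, bz1 hk3] at e1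
      have hinj := Sum.inr.inj e1
      have h2 : ((2*mq : ℕ) : ZMod (2*k)) = 0 := by
        push_cast
        push_cast at hinj
        linear_combination hinj
      rw [ZMod.natCast_eq_zero_iff] at h2
      obtain ⟨e, he⟩ := h2
      rw [show 2*k*e = 2*(k*e) by ring] at he
      have hmqe : mq = k*e := Nat.eq_of_mul_eq_mul_left (by norm_num) he
      obtain ⟨a, ha⟩ := hkodd
      rcases e with _ | _ | e
      · omega
      · omega
      · have h2k : k*2 ≤ k*(e+1+1) := Nat.mul_le_mul_left k (by omega)
        omega
    · rw [show ((3*mq+1:ℕ):ℤ) = 3*(mq:ℤ)+1 by push_cast; ring, bz1 hk3, s0] at e0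
      exact absurd e0 (by simp)
    · rw [show ((3*mq+2:ℕ):ℤ) = 3*(mq:ℤ)+2 by push_cast; ring, bz2 hk3, s0] at e0
      exact absurd e0 (by simp)
  seq_ne := by
    intro i
    obtain ⟨q, hq⟩ : ∃ q : ℤ, i = 3*q ∨ i = 3*q+1 ∨ i = 3*q+2 := ⟨i/3, by omega⟩
    rcases hq with rfl | rfl | rfl
    · rw [bz0 hk3, show 3*q+1 = 3*q+1 by ring, bz1 hk3]
      simp
    · rw [bz1 hk3, show 3*q+1+1 = 3*q+2 by ring, bz2 hk3]
      simp only [ne_eq, Sum.inr.injEq]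
      intro h
      exact one_ne hk3 (by linear_combination -h)
    · rw [bz2 hk3, show 3*q+2+1 = 3*(q+1) by ring, bz0 hk3]
      simp
  seq_adj := by
    intro i
    obtain ⟨q, hq⟩ : ∃ q : ℤ, i = 3*q ∨ i = 3*q+1 ∨ i = 3*q+2 := ⟨i/3, by omega⟩
    rcases hq with rfl | rfl | rfl
    · rw [bz0 hk3, show 3*q+1 = 3*q+1 by ring, bz1 hk3]
      exact adj_lr _ _
    · rw [bz1 hk3, show 3*q+1+1 = 3*q+2 by ring, bz2 hk3]
      exact adj_ring hk3 _
    · rw [bz2 hk3, show 3*q+2+1 = 3*(q+1) by ring, bz0 hk3]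
      exact adj_rl _ _
  face := zface k c
  face_mem := by
    intro i
    obtain ⟨q, hq⟩ : ∃ q : ℤ, i = 3*q ∨ i = 3*q+1 ∨ i = 3*q+2 := ⟨i/3, by omega⟩
    rcases hq with rfl | rfl | rfl
    · rw [zface0]
      exact ⟨_, 2*(q : ZMod (2*k)) + c, rfl⟩
    · rw [zface1]
      exact ⟨_, 2*(q : ZMod (2*k)) + c, rfl⟩
    · rw [zface2, show (2*(q : ZMod (2*k)) + c + 2) = 2*(q : ZMod (2*k)) + c + 1 + 1 by ring]
      exact ⟨_, 2*(q : ZMod (2*k)) + c + 1, rfl⟩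
  subset_face := by
    intro i
    obtain ⟨q, hq⟩ : ∃ q : ℤ, i = 3*q ∨ i = 3*q+1 ∨ i = 3*q+2 := ⟨i/3, by omega⟩
    rcases hq with rfl | rfl | rfl
    · rw [bz0 hk3, show 3*q+1 = 3*q+1 by ring, bz1 hk3, bz2 hk3, zface0]
    · rw [bz1 hk3, show 3*q+1+1 = 3*q+2 by ring, bz2 hk3, show 3*q+1+2 = 3*(q+1) by ring,
        bz0 hk3, zface1]
      intro x hx
      simp only [Finset.mem_insert, Finset.mem_singleton] at hx ⊢
      tauto
    · rw [bz2 hk3, show 3*q+2+1 = 3*(q+1) by ring, bz0 hk3, show 3*q+2+2 = 3*q+4 by ring,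
        bz4 hk3, zface2]
      intro x hx
      simp only [Finset.mem_insert, Finset.mem_singleton] at hx ⊢
      tauto
  face_unique := by
    intro i G hG hsub
    obtain ⟨q, hq⟩ : ∃ q : ℤ, i = 3*q ∨ i = 3*q+1 ∨ i = 3*q+2 := ⟨i/3, by omega⟩
    rcases hq with rfl | rfl | rfl
    · rw [bz0 hk3, show 3*q+1 = 3*q+1 by ring, bz1 hk3, bz2 hk3, mem3] at hsub
      rw [zface0]
      exact bp_face_unique hk3 hG _ _ hsub.1 hsub.2.1 hsub.2.2
    · rw [bz1 hk3, show 3*q+1+1 = 3*q+2 by ring, bz2 hk3, show 3*q+1+2 = 3*(q+1) by ring,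
        bz0 hk3, mem3] at hsub
      rw [zface1]
      exact bp_face_unique hk3 hG _ _ hsub.2.2 hsub.1 hsub.2.1
    · rw [bz2 hk3, show 3*q+2+1 = 3*(q+1) by ring, bz0 hk3, show 3*q+2+2 = 3*q+4 by ring,
        bz4 hk3, mem3] at hsub
      rw [zface2, show (2*(q : ZMod (2*k)) + c + 2) = 2*(q : ZMod (2*k)) + c + 1 + 1 by ring]
      refine bp_face_unique hk3 hG _ _ hsub.2.1 hsub.1 ?_
      rw [show (2*(q : ZMod (2*k)) + c + 1 + 1) = 2*(q : ZMod (2*k)) + c + 2 by ring]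
      exact hsub.2.2
  face_ne := by
    intro i
    obtain ⟨q, hq⟩ : ∃ q : ℤ, i = 3*q ∨ i = 3*q+1 ∨ i = 3*q+2 := ⟨i/3, by omega⟩
    rcases hq with rfl | rfl | rfl
    · rw [zface0, show 3*q+1 = 3*q+1 by ring, zface1]
      intro h
      have hm : (Sum.inl (decide (q % 2 = 0)) : Bool ⊕ ZMod (2*k)) ∈
          ({Sum.inl (decide ((q+1) % 2 = 0)), Sum.inr (2*(q : ZMod (2*k)) + c),
            Sum.inr (2*(q : ZMod (2*k)) + c + 1)} : Finset (Bool ⊕ ZMod (2*k))) := by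
        rw [← h]; simp
      simp only [Finset.mem_insert, Finset.mem_singleton, Sum.inl.injEq,
        reduceCtorEq, or_false] at hm
      rw [decide_eq_decide] at hm
      omega
    · rw [zface1, show 3*q+1+1 = 3*q+2 by ring, zface2]
      intro h
      have hm : (Sum.inr (2*(q : ZMod (2*k)) + c) : Bool ⊕ ZMod (2*k)) ∈
          ({Sum.inl (decide ((q+1) % 2 = 0)), Sum.inr (2*(q : ZMod (2*k)) + c + 1),
            Sum.inr (2*(q : ZMod (2*k)) + c + 2)} : Finset (Bool ⊕ ZMod (2*k))) := by
        rw [← h]; simp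
      simp only [Finset.mem_insert, Finset.mem_singleton, Sum.inr.injEq,
        reduceCtorEq, false_or] at hm
      rcases hm with hm | hm
      · exact one_ne hk3 (by linear_combination -hm)
      · exact two_ne hk3 (by linear_combination -hm)
    · rw [zface2, show 3*q+2+1 = 3*(q+1) by ring, zface0]
      intro h
      have hm : (Sum.inr (2*(q : ZMod (2*k)) + c + 1) : Bool ⊕ ZMod (2*k)) ∈
          ({Sum.inl (decide ((q+1) % 2 = 0)), Sum.inr (2*((q+1:ℤ) : ZMod (2*k)) + c),
            Sum.inr (2*((q+1:ℤ) : ZMod (2*k)) + c + 1)} : Finset (Bool ⊕ ZMod (2*k))) := by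
        rw [← h]; simp
      simp only [Finset.mem_insert, Finset.mem_singleton, Sum.inr.injEq,
        reduceCtorEq, false_or] at hm
      push_cast at hm
      rcases hm with hm | hm
      · exact one_ne hk3 (by linear_combination -hm)
      · exact two_ne hk3 (by linear_combination -hm)


lemma nonequiv (hk3 : 3 ≤ k) (hkodd : Odd k) :
    ¬ ZigzagEquiv (mkZig k hk3 hkodd 0) (mkZig k hk3 hkodd 1) := by
  have s0 : bpZigSeq (2*k) (1 : ZMod (2*k)) 0 = Sum.inl true := by
    have h := bz0 hk3 (1 : ZMod (2*k)) 0
    norm_num at h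
    exact h
  have s1 : bpZigSeq (2*k) (1 : ZMod (2*k)) 1 = Sum.inr 1 := by
    have h := bz1 hk3 (1 : ZMod (2*k)) 0
    norm_num at h
    exact h
  have s2 : bpZigSeq (2*k) (1 : ZMod (2*k)) 2 = Sum.inr 2 := by
    have h := bz2 hk3 (1 : ZMod (2*k)) 0
    norm_num at h
    exact h
  rintro (⟨p, hp⟩ | ⟨p, hp⟩) <;>
    simp only [show (mkZig k hk3 hkodd (1 : ZMod (2*k))).seq = bpZigSeq (2*k) 1 from rfl,
      show (mkZig k hk3 hkodd (0 : ZMod (2*k))).seq = bpZigSeq (2*k) 0 from rfl] at hp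
  · obtain ⟨q, hq⟩ : ∃ q : ℤ, p = 3*q ∨ p = 3*q+1 ∨ p = 3*q+2 := ⟨p/3, by omega⟩
    have h0 := hp 0
    rw [zero_add, s0] at h0
    rcases hq with rfl | rfl | rfl
    · have h1 := hp 1
      rw [show (1:ℤ) + 3*q = 3*q+1 by ring, bz1 hk3, s1] at h1
      have hinj := Sum.inr.inj h1
      exact two_mul_ne (q : ZMod (2*k)) 0 (by linear_combination -hinj)
    · rw [bz1 hk3] at h0
      exact absurd h0 (by simp)
    · rw [bz2 hk3] at h0
      exact absurd h0 (by simp)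
  · obtain ⟨q, hq⟩ : ∃ q : ℤ, p = 3*q ∨ p = 3*q+1 ∨ p = 3*q+2 := ⟨p/3, by omega⟩
    have h0 := hp 0
    rw [sub_zero, s0] at h0
    rcases hq with rfl | rfl | rfl
    · have h1 := hp 1
      rw [show 3*q - 1 = 3*(q-1)+2 by ring, bz2 hk3, s1] at h1
      have h2 := hp 2
      rw [show 3*q - 2 = 3*(q-1)+1 by ring, bz1 hk3, s2] at h2
      have hinj1 := Sum.inr.inj h1
      have hinj2 := Sum.inr.inj h2
      exact two_ne hk3 (by linear_combination hinj2 - hinj1)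
    · rw [bz1 hk3] at h0
      exact absurd h0 (by simp)
    · rw [bz2 hk3] at h0
      exact absurd h0 (by simp)

lemma cover (hk3 : 3 ≤ k) (hkodd : Odd k) (Z : (bp (2*k)).Zigzag) :
    ZigzagEquiv Z (mkZig k hk3 hkodd 0) ∨ ZigzagEquiv Z (mkZig k hk3 hkodd 1) := by
  have hxy : Z.seq 0 ≠ Z.seq 1 := by
    have := Z.seq_ne 0
    rwa [zero_add] at this
  have hyz : Z.seq 1 ≠ Z.seq 2 := by
    have := Z.seq_ne 1
    rwa [show (1:ℤ)+1 = 2 by norm_num] at this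
  have hxz : Z.seq 0 ≠ Z.seq 2 := by
    have := seq_ne2 hk3 Z 0
    rwa [zero_add] at this
  obtain ⟨s, u, hF⟩ := Z.face_mem 0
  have hsub := mem3.mp (Z.subset_face 0)
  rw [zero_add, show (0:ℤ)+2 = 2 by norm_num, hF] at hsub
  have hx := hsub.1
  have hy := hsub.2.1
  have hz := hsub.2.2
  simp only [Finset.mem_insert, Finset.mem_singleton] at hx hy hz
  obtain ⟨q₀, hu⟩ := even_odd_pick hk3 u
  rcases perm3 hx hy hz hxy hxz hyz with
    ⟨e1,e2,e3⟩|⟨e1,e2,e3⟩|⟨e1,e2,e3⟩|⟨e1,e2,e3⟩|⟨e1,e2,e3⟩|⟨e1,e2,e3⟩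
  -- Case 1 : (inl s, inr u, inr (u+1))
  · rcases hu with hu | hu
    · obtain ⟨q, hqb, hq2⟩ := parity_pick hkodd s q₀
      refine Or.inl (equivFwd hk3 Z _ (3*q) ?_ ?_ ?_)
      · show Z.seq 0 = bpZigSeq (2*k) 0 (3*q)
        rw [bz0 hk3, e1, hqb]
      · show Z.seq 1 = bpZigSeq (2*k) 0 (3*q+1)
        rw [bz1 hk3, e2]
        congr 1
        rw [hu]
        linear_combination -hq2
      · show Z.seq 2 = bpZigSeq (2*k) 0 (3*q+2)
        rw [bz2 hk3, e3]
        congr 1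
        rw [hu]
        linear_combination -hq2
    · obtain ⟨q, hqb, hq2⟩ := parity_pick hkodd s q₀
      refine Or.inr (equivFwd hk3 Z _ (3*q) ?_ ?_ ?_)
      · show Z.seq 0 = bpZigSeq (2*k) 1 (3*q)
        rw [bz0 hk3, e1, hqb]
      · show Z.seq 1 = bpZigSeq (2*k) 1 (3*q+1)
        rw [bz1 hk3, e2]
        congr 1
        rw [hu]
        linear_combination -hq2
      · show Z.seq 2 = bpZigSeq (2*k) 1 (3*q+2)
        rw [bz2 hk3, e3]
        congr 1
        rw [hu]
        linear_combination -hq2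
  -- Case 2 : (inl s, inr (u+1), inr u) : reversed, p = 3*(q+1)
  · rcases hu with hu | hu
    · obtain ⟨q, hqb, hq2⟩ := parity_pick hkodd (!s) q₀
      have hsb : decide ((q+1) % 2 = 0) = s := by rw [sb_succ, hqb, Bool.not_not]
      refine Or.inl (equivRev hk3 Z _ (3*(q+1)) ?_ ?_ ?_)
      · show Z.seq 0 = bpZigSeq (2*k) 0 (3*(q+1))
        rw [bz0 hk3, e1, hsb]
      · show Z.seq 1 = bpZigSeq (2*k) 0 (3*(q+1)-1)
        rw [show 3*(q+1)-1 = 3*q+2 by ring, bz2 hk3, e2]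
        congr 1
        rw [hu]
        linear_combination -hq2
      · show Z.seq 2 = bpZigSeq (2*k) 0 (3*(q+1)-2)
        rw [show 3*(q+1)-2 = 3*q+1 by ring, bz1 hk3, e3]
        congr 1
        rw [hu]
        linear_combination -hq2
    · obtain ⟨q, hqb, hq2⟩ := parity_pick hkodd (!s) q₀
      have hsb : decide ((q+1) % 2 = 0) = s := by rw [sb_succ, hqb, Bool.not_not]
      refine Or.inr (equivRev hk3 Z _ (3*(q+1)) ?_ ?_ ?_)
      · show Z.seq 0 = bpZigSeq (2*k) 1 (3*(q+1))
        rw [bz0 hk3, e1, hsb]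
      · show Z.seq 1 = bpZigSeq (2*k) 1 (3*(q+1)-1)
        rw [show 3*(q+1)-1 = 3*q+2 by ring, bz2 hk3, e2]
        congr 1
        rw [hu]
        linear_combination -hq2
      · show Z.seq 2 = bpZigSeq (2*k) 1 (3*(q+1)-2)
        rw [show 3*(q+1)-2 = 3*q+1 by ring, bz1 hk3, e3]
        congr 1
        rw [hu]
        linear_combination -hq2
  -- Case 3 : (inr u, inl s, inr (u+1)) : forward, p = 3*q+2
  · rcases hu with hu | hu
    · -- u even : c = 1, base q₀ - 1
      obtain ⟨q, hqb, hq2⟩ := parity_pick hkodd (!s) (q₀-1)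
      have hq2' : 2*(q : ZMod (2*k)) = 2*(q₀ : ZMod (2*k)) - 2 := by
        rw [hq2]
        push_cast
        ring
      have hsb : decide ((q+1) % 2 = 0) = s := by rw [sb_succ, hqb, Bool.not_not]
      refine Or.inr (equivFwd hk3 Z _ (3*q+2) ?_ ?_ ?_)
      · show Z.seq 0 = bpZigSeq (2*k) 1 (3*q+2)
        rw [bz2 hk3, e1]
        congr 1
        rw [hu]
        linear_combination -hq2'
      · show Z.seq 1 = bpZigSeq (2*k) 1 (3*q+2+1)
        rw [show 3*q+2+1 = 3*(q+1) by ring, bz0 hk3, e2, hsb]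
      · show Z.seq 2 = bpZigSeq (2*k) 1 (3*q+2+2)
        rw [show 3*q+2+2 = 3*q+4 by ring, bz4 hk3, e3]
        congr 1
        rw [hu]
        linear_combination -hq2'
    · -- u odd : c = 0, base q₀
      obtain ⟨q, hqb, hq2⟩ := parity_pick hkodd (!s) q₀
      have hsb : decide ((q+1) % 2 = 0) = s := by rw [sb_succ, hqb, Bool.not_not]
      refine Or.inl (equivFwd hk3 Z _ (3*q+2) ?_ ?_ ?_)
      · show Z.seq 0 = bpZigSeq (2*k) 0 (3*q+2)
        rw [bz2 hk3, e1]
        congr 1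
        rw [hu]
        linear_combination -hq2
      · show Z.seq 1 = bpZigSeq (2*k) 0 (3*q+2+1)
        rw [show 3*q+2+1 = 3*(q+1) by ring, bz0 hk3, e2, hsb]
      · show Z.seq 2 = bpZigSeq (2*k) 0 (3*q+2+2)
        rw [show 3*q+2+2 = 3*q+4 by ring, bz4 hk3, e3]
        congr 1
        rw [hu]
        linear_combination -hq2
  -- Case 5 : (inr u, inr (u+1), inl s) : forward, p = 3*q+1
  · rcases hu with hu | hu
    · obtain ⟨q, hqb, hq2⟩ := parity_pick hkodd (!s) q₀
      have hsb : decide ((q+1) % 2 = 0) = s := by rw [sb_succ, hqb, Bool.not_not]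
      refine Or.inl (equivFwd hk3 Z _ (3*q+1) ?_ ?_ ?_)
      · show Z.seq 0 = bpZigSeq (2*k) 0 (3*q+1)
        rw [bz1 hk3, e1]
        congr 1
        rw [hu]
        linear_combination -hq2
      · show Z.seq 1 = bpZigSeq (2*k) 0 (3*q+1+1)
        rw [show 3*q+1+1 = 3*q+2 by ring, bz2 hk3, e2]
        congr 1
        rw [hu]
        linear_combination -hq2
      · show Z.seq 2 = bpZigSeq (2*k) 0 (3*q+1+2)
        rw [show 3*q+1+2 = 3*(q+1) by ring, bz0 hk3, e3, hsb]
    · obtain ⟨q, hqb, hq2⟩ := parity_pick hkodd (!s) q₀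
      have hsb : decide ((q+1) % 2 = 0) = s := by rw [sb_succ, hqb, Bool.not_not]
      refine Or.inr (equivFwd hk3 Z _ (3*q+1) ?_ ?_ ?_)
      · show Z.seq 0 = bpZigSeq (2*k) 1 (3*q+1)
        rw [bz1 hk3, e1]
        congr 1
        rw [hu]
        linear_combination -hq2
      · show Z.seq 1 = bpZigSeq (2*k) 1 (3*q+1+1)
        rw [show 3*q+1+1 = 3*q+2 by ring, bz2 hk3, e2]
        congr 1
        rw [hu]
        linear_combination -hq2
      · show Z.seq 2 = bpZigSeq (2*k) 1 (3*q+1+2)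
        rw [show 3*q+1+2 = 3*(q+1) by ring, bz0 hk3, e3, hsb]
  -- Case 4 : (inr (u+1), inl s, inr u) : reversed, p = 3*q+4
  · rcases hu with hu | hu
    · -- u even : c = 1, base q₀ - 1
      obtain ⟨q, hqb, hq2⟩ := parity_pick hkodd (!s) (q₀-1)
      have hq2' : 2*(q : ZMod (2*k)) = 2*(q₀ : ZMod (2*k)) - 2 := by
        rw [hq2]
        push_cast
        ring
      have hsb : decide ((q+1) % 2 = 0) = s := by rw [sb_succ, hqb, Bool.not_not]
      refine Or.inr (equivRev hk3 Z _ (3*q+4) ?_ ?_ ?_)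
      · show Z.seq 0 = bpZigSeq (2*k) 1 (3*q+4)
        rw [bz4 hk3, e1]
        congr 1
        rw [hu]
        linear_combination -hq2'
      · show Z.seq 1 = bpZigSeq (2*k) 1 (3*q+4-1)
        rw [show 3*q+4-1 = 3*(q+1) by ring, bz0 hk3, e2, hsb]
      · show Z.seq 2 = bpZigSeq (2*k) 1 (3*q+4-2)
        rw [show 3*q+4-2 = 3*q+2 by ring, bz2 hk3, e3]
        congr 1
        rw [hu]
        linear_combination -hq2'
    · -- u odd : c = 0, base q₀
      obtain ⟨q, hqb, hq2⟩ := parity_pick hkodd (!s) q₀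
      have hsb : decide ((q+1) % 2 = 0) = s := by rw [sb_succ, hqb, Bool.not_not]
      refine Or.inl (equivRev hk3 Z _ (3*q+4) ?_ ?_ ?_)
      · show Z.seq 0 = bpZigSeq (2*k) 0 (3*q+4)
        rw [bz4 hk3, e1]
        congr 1
        rw [hu]
        linear_combination -hq2
      · show Z.seq 1 = bpZigSeq (2*k) 0 (3*q+4-1)
        rw [show 3*q+4-1 = 3*(q+1) by ring, bz0 hk3, e2, hsb]
      · show Z.seq 2 = bpZigSeq (2*k) 0 (3*q+4-2)
        rw [show 3*q+4-2 = 3*q+2 by ring, bz2 hk3, e3]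
        congr 1
        rw [hu]
        linear_combination -hq2
  -- Case 6 : (inr (u+1), inr u, inl s) : reversed, p = 3*q+2
  · rcases hu with hu | hu
    · obtain ⟨q, hqb, hq2⟩ := parity_pick hkodd s q₀
      refine Or.inl (equivRev hk3 Z _ (3*q+2) ?_ ?_ ?_)
      · show Z.seq 0 = bpZigSeq (2*k) 0 (3*q+2)
        rw [bz2 hk3, e1]
        congr 1
        rw [hu]
        linear_combination -hq2
      · show Z.seq 1 = bpZigSeq (2*k) 0 (3*q+2-1)
        rw [show 3*q+2-1 = 3*q+1 by ring, bz1 hk3, e2]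
        congr 1
        rw [hu]
        linear_combination -hq2
      · show Z.seq 2 = bpZigSeq (2*k) 0 (3*q+2-2)
        rw [show 3*q+2-2 = 3*q by ring, bz0 hk3, e3, hqb]
    · obtain ⟨q, hqb, hq2⟩ := parity_pick hkodd s q₀
      refine Or.inr (equivRev hk3 Z _ (3*q+2) ?_ ?_ ?_)
      · show Z.seq 0 = bpZigSeq (2*k) 1 (3*q+2)
        rw [bz2 hk3, e1]
        congr 1
        rw [hu]
        linear_combination -hq2
      · show Z.seq 1 = bpZigSeq (2*k) 1 (3*q+2-1)
        rw [show 3*q+2-1 = 3*q+1 by ring, bz1 hk3, e2]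
        congr 1
        rw [hu]
        linear_combination -hq2
      · show Z.seq 2 = bpZigSeq (2*k) 1 (3*q+2-2)
        rw [show 3*q+2-2 = 3*q by ring, bz0 hk3, e3, hqb]

end ZZAux
end


theorem statement_18 (k : ℕ) (hk3 : 3 ≤ k) (hkodd : Odd k) :
    ∃ Z₁ Z₂ : (bp (2 * k)).Zigzag,
      Z₁.seq = bpZigSeq (2 * k) 0 ∧ Z₂.seq = bpZigSeq (2 * k) 1 ∧
      ¬ ZigzagEquiv Z₁ Z₂ ∧
      ∀ Z : (bp (2 * k)).Zigzag, ZigzagEquiv Z Z₁ ∨ ZigzagEquiv Z Z₂ :=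
  ⟨ZZAux.mkZig k hk3 hkodd 0, ZZAux.mkZig k hk3 hkodd 1, rfl, rfl,
    ZZAux.nonequiv hk3 hkodd, ZZAux.cover hk3 hkodd⟩
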